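/- Let p(z) = Σ_{j=0}^n a_j z^j be a complex polynomial of degree n ≥ 3 with all coefficients nonzero (so k = ℓ = 1). If p has no zero of modulus equal to ρ[p], then ρ[q_1] < ρ[p] strictly, where q_1(z) = (a_n z^2 − a_{n-1} z − a_{n-2}) p(z). -/

import Mathlib

open Polynomial

/-- The function whose unique positive root is the Cauchy radius of `q`. -/
noncomputable def cauchyFun (q : Polynomial ℂ) (x : ℝ) : ℝ :=
  ‖q.leadingCoeff‖ * x ^ q.natDegree
    - ∑ j ∈ Finset.range q.natDegree, ‖q.coeff j‖ * x ^ j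

private lemma cauchy_mono (q : Polynomial ℂ) {x y : ℝ} (hy : 0 < y) (hxy : y ≤ x) :
    cauchyFun q y * x ^ q.natDegree ≤ cauchyFun q x * y ^ q.natDegree := by
  have hx : 0 < x := lt_of_lt_of_le hy hxy
  unfold cauchyFun
  rw [sub_mul, sub_mul, Finset.sum_mul, Finset.sum_mul]
  have h1 : ‖q.leadingCoeff‖ * y ^ q.natDegree * x ^ q.natDegree
      = ‖q.leadingCoeff‖ * x ^ q.natDegree * y ^ q.natDegree := by ring
  rw [h1]
  apply sub_le_sub_left
  apply Finset.sum_le_sum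
  intro j hj
  rw [Finset.mem_range] at hj
  obtain ⟨k, hk⟩ : ∃ k, q.natDegree = j + k := ⟨q.natDegree - j, by omega⟩
  rw [hk]
  have h2 : x ^ j * y ^ (j + k) ≤ y ^ j * x ^ (j + k) := by
    rw [pow_add, pow_add]
    have : y ^ k ≤ x ^ k := pow_le_pow_left₀ hy.le hxy k
    calc x ^ j * (y ^ j * y ^ k) = (x ^ j * y ^ j) * y ^ k := by ring
      _ ≤ (x ^ j * y ^ j) * x ^ k := by
          apply mul_le_mul_of_nonneg_left this (by positivity)
      _ = y ^ j * (x ^ j * x ^ k) := by ring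
  calc ‖q.coeff j‖ * x ^ j * y ^ (j + k)
      = ‖q.coeff j‖ * (x ^ j * y ^ (j + k)) := by ring
    _ ≤ ‖q.coeff j‖ * (y ^ j * x ^ (j + k)) :=
        mul_le_mul_of_nonneg_left h2 (norm_nonneg _)
    _ = ‖q.coeff j‖ * y ^ j * x ^ (j + k) := by ring

private lemma abs_sub_le3 (u v w : ℂ) :
    ‖u - v - w‖ ≤ ‖u‖ + ‖v‖ + ‖w‖ := by
  calc ‖u - v - w‖ ≤ ‖u - v‖ + ‖w‖ := by
        simpa using norm_sub_le (u - v) w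
    _ ≤ ‖u‖ + ‖v‖ + ‖w‖ := by
        have : ‖u - v‖ ≤ ‖u‖ + ‖v‖ := by
          simpa using norm_sub_le u v
        linarith

private lemma coeff_q2 (A B Cc : ℂ) (p : Polynomial ℂ) (j : ℕ) :
    ((C A * X ^ 2 - C B * X - C Cc) * p).coeff (j + 2)
      = A * p.coeff j - B * p.coeff (j + 1) - Cc * p.coeff (j + 2) := by
  have hq : (C A * X ^ 2 - C B * X - C Cc) * p
      = C A * (X ^ 2 * p) - C B * (X * p) - C Cc * p := by ring
  rw [hq, coeff_sub, coeff_sub, coeff_C_mul, coeff_C_mul, coeff_C_mul]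
  rw [show j + 2 = (j + 1) + 1 from rfl, coeff_X_mul]
  rw [show (j + 1) + 1 = j + 2 from rfl]
  have : (X ^ 2 * p).coeff (j + 2) = p.coeff j := by
    simpa using Polynomial.coeff_X_pow_mul p 2 j
  rw [this]

private lemma coeff_q1 (A B Cc : ℂ) (p : Polynomial ℂ) :
    ((C A * X ^ 2 - C B * X - C Cc) * p).coeff 1
      = -(B * p.coeff 0) - Cc * p.coeff 1 := by
  have hq : (C A * X ^ 2 - C B * X - C Cc) * p
      = C A * (X ^ 2 * p) - C B * (X * p) - C Cc * p := by ring
  rw [hq, coeff_sub, coeff_sub, coeff_C_mul, coeff_C_mul, coeff_C_mul]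
  have h2 : (X ^ 2 * p).coeff 1 = 0 := by
    rw [pow_two, mul_assoc]
    simp [Polynomial.coeff_X_mul]
  have h1 : (X * p).coeff 1 = p.coeff 0 := by
    simpa using Polynomial.coeff_X_mul p 0
  rw [h1, h2]
  ring

private lemma coeff_q0 (A B Cc : ℂ) (p : Polynomial ℂ) :
    ((C A * X ^ 2 - C B * X - C Cc) * p).coeff 0 = -(Cc * p.coeff 0) := by
  have hq : (C A * X ^ 2 - C B * X - C Cc) * p
      = C A * (X ^ 2 * p) - C B * (X * p) - C Cc * p := by ring
  rw [hq, coeff_sub, coeff_sub, coeff_C_mul, coeff_C_mul, coeff_C_mul]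
  have h2 : (X ^ 2 * p).coeff 0 = 0 := by
    rw [pow_two, mul_assoc]; simp
  have h1 : (X * p).coeff 0 = 0 := by simp
  rw [h1, h2]
  ring

private lemma mult_natDegree {A B Cc : ℂ} (hA : A ≠ 0) :
    (C A * X ^ 2 - C B * X - C Cc).natDegree = 2 := by
  have h : C A * X ^ 2 - C B * X - C Cc = C A * X ^ 2 + C (-B) * X + C (-Cc) := by
    rw [map_neg, map_neg]; ring
  rw [h]
  exact natDegree_quadratic hA

private lemma mult_leadingCoeff {A B Cc : ℂ} (hA : A ≠ 0) :
    (C A * X ^ 2 - C B * X - C Cc).leadingCoeff = A := by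
  have h : C A * X ^ 2 - C B * X - C Cc = C A * X ^ 2 + C (-B) * X + C (-Cc) := by
    rw [map_neg, map_neg]; ring
  rw [h]
  exact leadingCoeff_quadratic hA

theorem strict_improvement_q1
    (p : Polynomial ℂ) (n : ℕ) (hn : p.natDegree = n) (hn3 : 3 ≤ n)
    (ha : ∀ j ≤ n, p.coeff j ≠ 0)
    (x y : ℝ) (hx : 0 < x) (hy : 0 < y)
    (hxroot : cauchyFun
      ((C (p.coeff n) * X ^ 2 - C (p.coeff (n - 1)) * X - C (p.coeff (n - 2))) * p) x = 0)
    (hyroot : cauchyFun p y = 0)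
    (hnozero : ∀ z : ℂ, p.eval z = 0 → ‖z‖ ≠ y) :
    x < y := by
  obtain ⟨m, rfl⟩ : ∃ m, n = m + 3 := ⟨n - 3, by omega⟩
  rw [show m + 3 - 1 = m + 2 from rfl, show m + 3 - 2 = m + 1 from rfl] at hxroot
  set A := p.coeff (m + 3) with hA_def
  set B := p.coeff (m + 2) with hB_def
  set Cc := p.coeff (m + 1) with hC_def
  set r : ℕ → ℝ := fun j => ‖p.coeff j‖ with hr_def
  have hr_nonneg : ∀ j, 0 ≤ r j := fun j => norm_nonneg _
  have hr_ne : ∀ j ≤ m + 3, r j ≠ 0 := fun j hj => by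
    simpa [hr_def, norm_eq_zero] using ha j hj
  have hA0 : A ≠ 0 := ha _ le_rfl
  have hB0 : B ≠ 0 := ha _ (by omega)
  have hC0 : Cc ≠ 0 := ha _ (by omega)
  have hp0 : p ≠ 0 := fun h => hA0 (by simp [hA_def, h])
  set q := (C A * X ^ 2 - C B * X - C Cc) * p with hq_def
  have hm0 : (C A * X ^ 2 - C B * X - C Cc) ≠ 0 := by
    intro h
    have := mult_leadingCoeff (B := B) (Cc := Cc) hA0
    rw [h] at this
    exact hA0 (by simpa using this.symm)
  have hqdeg : q.natDegree = m + 5 := by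
    rw [hq_def, natDegree_mul hm0 hp0, mult_natDegree hA0, hn]; omega
  have hqlead : ‖q.leadingCoeff‖ = r (m + 3) ^ 2 := by
    rw [hq_def, leadingCoeff_mul, mult_leadingCoeff hA0, norm_mul]
    rw [Polynomial.leadingCoeff, hn]
    simp [hr_def, sq, hA_def]
  -- the Cauchy equation for p at y
  have hS : r (m + 3) * y ^ (m + 3) = ∑ j ∈ Finset.range (m + 3), r j * y ^ j := by
    have := hyroot
    unfold cauchyFun at this
    rw [hn, Polynomial.leadingCoeff, hn] at this
    linarith [this]
  -- abbreviations
  set T : ℕ → ℝ := fun j =>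
    ‖A * p.coeff j - B * p.coeff (j + 1) - Cc * p.coeff (j + 2)‖ with hT_def
  set U : ℕ → ℝ := fun j =>
    r (m + 3) * r j + r (m + 2) * r (j + 1) + r (m + 1) * r (j + 2) with hU_def
  set T1 : ℝ := ‖B * p.coeff 0 + Cc * p.coeff 1‖ with hT1_def
  set U1 : ℝ := r (m + 2) * r 0 + r (m + 1) * r 1 with hU1_def
  -- ① value of cauchyFun q at y
  have hq_y : cauchyFun q y = r (m + 3) ^ 2 * y ^ (m + 5) - r (m + 2) ^ 2 * y ^ (m + 3)
      - (∑ j ∈ Finset.range (m + 1), T j * y ^ (j + 2)) - T1 * y - r (m + 1) * r 0 := by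
    have hc4 : q.coeff (m + 4) = 0 := by
      rw [show m + 4 = m + 2 + 2 from rfl, hq_def, coeff_q2]
      have h4 : p.coeff (m + 2 + 2) = 0 :=
        coeff_eq_zero_of_natDegree_lt (by rw [hn]; omega)
      rw [h4, ← hB_def, show m + 2 + 1 = m + 3 from rfl, ← hA_def]
      ring
    have hc3 : q.coeff (m + 3) = -(B * B) := by
      rw [show m + 3 = m + 1 + 2 from rfl, hq_def, coeff_q2]
      rw [← hC_def, show m + 1 + 1 = m + 2 from rfl, ← hB_def,
        show m + 1 + 2 = m + 3 from rfl, ← hA_def]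
      ring
    have hc1 : ‖q.coeff 1‖ = T1 := by
      rw [hq_def, coeff_q1]
      rw [show -(B * p.coeff 0) - Cc * p.coeff 1 = -(B * p.coeff 0 + Cc * p.coeff 1) by ring]
      rw [norm_neg]
    have hc0 : ‖q.coeff 0‖ = r (m + 1) * r 0 := by
      rw [hq_def, coeff_q0, norm_neg, norm_mul]
    have hsplit : ∑ k ∈ Finset.range (m + 5), ‖q.coeff k‖ * y ^ k
        = (∑ j ∈ Finset.range (m + 3), ‖q.coeff (j + 2)‖ * y ^ (j + 2))
          + ‖q.coeff 1‖ * y + ‖q.coeff 0‖ := by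
      rw [show m + 5 = (m + 4) + 1 from rfl, Finset.sum_range_succ']
      rw [show m + 4 = (m + 3) + 1 from rfl, Finset.sum_range_succ']
      norm_num
      try ring
    have hinner : (∑ j ∈ Finset.range (m + 3), ‖q.coeff (j + 2)‖ * y ^ (j + 2))
        = (∑ j ∈ Finset.range (m + 1), T j * y ^ (j + 2)) + r (m + 2) ^ 2 * y ^ (m + 3) := by
      rw [show m + 3 = (m + 2) + 1 from rfl, Finset.sum_range_succ,
        show m + 2 = (m + 1) + 1 from rfl, Finset.sum_range_succ]
      rw [show m + 1 + 1 + 2 = m + 4 from rfl, hc4, show m + 1 + 2 = m + 3 from rfl, hc3]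
      have habsB : ‖-(B * B)‖ = r (m + 2) ^ 2 := by
        rw [norm_neg, norm_mul, sq]
      rw [habsB]
      have hsum_eq : ∑ j ∈ Finset.range (m + 1), ‖q.coeff (j + 2)‖ * y ^ (j + 2)
          = ∑ j ∈ Finset.range (m + 1), T j * y ^ (j + 2) := by
        apply Finset.sum_congr rfl
        intro j _
        rw [hq_def, coeff_q2, hT_def]
      rw [hsum_eq]
      simp
      try ring
    unfold cauchyFun
    rw [hqdeg, hqlead, hsplit, hinner, hc1, hc0]
    ring
  -- ② the identity from hS
  have hId : r (m + 3) ^ 2 * y ^ (m + 5) - r (m + 2) ^ 2 * y ^ (m + 3)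
      = (∑ j ∈ Finset.range (m + 1), U j * y ^ (j + 2)) + U1 * y + r (m + 1) * r 0 := by
    set P1 : ℝ := ∑ j ∈ Finset.range (m + 1), r j * y ^ j with hP1_def
    have hsum2 : ∑ j ∈ Finset.range (m + 2), r j * y ^ j
        = P1 + r (m + 1) * y ^ (m + 1) := by
      rw [Finset.sum_range_succ]
    have hsum3 : ∑ j ∈ Finset.range (m + 3), r j * y ^ j
        = P1 + r (m + 1) * y ^ (m + 1) + r (m + 2) * y ^ (m + 2) := by
      rw [Finset.sum_range_succ, hsum2]
    have hP1 : P1 = r (m + 3) * y ^ (m + 3) - r (m + 1) * y ^ (m + 1)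
        - r (m + 2) * y ^ (m + 2) := by
      rw [hS, hsum3]; ring
    have hSa : ∑ j ∈ Finset.range (m + 1), r j * y ^ (j + 2) = P1 * y ^ 2 := by
      rw [hP1_def, Finset.sum_mul]
      exact Finset.sum_congr rfl fun j _ => by rw [pow_add, mul_assoc]
    have hSb : ∑ j ∈ Finset.range (m + 1), r (j + 1) * y ^ (j + 2)
        = (P1 + r (m + 1) * y ^ (m + 1)) * y - r 0 * y := by
      have h := Finset.sum_range_succ' (fun k => r k * y ^ (k + 1)) (m + 1)
      have h2 : ∑ k ∈ Finset.range (m + 2), r k * y ^ (k + 1)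
          = (P1 + r (m + 1) * y ^ (m + 1)) * y := by
        rw [← hsum2, Finset.sum_mul]
        exact Finset.sum_congr rfl fun k _ => by rw [pow_succ, mul_assoc]
      rw [h2] at h
      simp only [zero_add, pow_one] at h
      linarith [h]
    have hSc : ∑ j ∈ Finset.range (m + 1), r (j + 2) * y ^ (j + 2)
        = (P1 + r (m + 1) * y ^ (m + 1) + r (m + 2) * y ^ (m + 2)) - r 0 - r 1 * y := by
      have h3 := Finset.sum_range_succ' (fun k => r k * y ^ k) (m + 2)
      have h4 := Finset.sum_range_succ' (fun k => r (k + 1) * y ^ (k + 1)) (m + 1)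
      rw [hsum3] at h3
      simp only [zero_add, pow_one, pow_zero, mul_one] at h3 h4
      linarith [h3, h4]
    have hU_expand : ∑ j ∈ Finset.range (m + 1), U j * y ^ (j + 2)
        = r (m + 3) * (∑ j ∈ Finset.range (m + 1), r j * y ^ (j + 2))
          + r (m + 2) * (∑ j ∈ Finset.range (m + 1), r (j + 1) * y ^ (j + 2))
          + r (m + 1) * (∑ j ∈ Finset.range (m + 1), r (j + 2) * y ^ (j + 2)) := by
      rw [Finset.mul_sum, Finset.mul_sum, Finset.mul_sum,
        ← Finset.sum_add_distrib, ← Finset.sum_add_distrib]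
      exact Finset.sum_congr rfl fun j _ => by rw [hU_def]; ring
    rw [hU_expand, hSa, hSb, hSc, hP1, hU1_def]
    ring
  -- ③ key formula
  have hkey : cauchyFun q y
      = (∑ j ∈ Finset.range (m + 1), (U j - T j) * y ^ (j + 2)) + (U1 - T1) * y := by
    rw [hq_y, hId]
    rw [show (∑ j ∈ Finset.range (m + 1), (U j - T j) * y ^ (j + 2))
        = (∑ j ∈ Finset.range (m + 1), U j * y ^ (j + 2))
          - (∑ j ∈ Finset.range (m + 1), T j * y ^ (j + 2)) by
      rw [← Finset.sum_sub_distrib]; exact Finset.sum_congr rfl fun j _ => by ring]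
    ring
  -- triangle inequalities
  have hTU : ∀ j, T j ≤ U j := by
    intro j
    have := abs_sub_le3 (A * p.coeff j) (B * p.coeff (j + 1)) (Cc * p.coeff (j + 2))
    simpa [hT_def, hU_def, hr_def, norm_mul] using this
  have hTU1 : T1 ≤ U1 := by
    have : ‖B * p.coeff 0 + Cc * p.coeff 1‖
        ≤ ‖B * p.coeff 0‖ + ‖Cc * p.coeff 1‖ := by
      simpa using norm_add_le (B * p.coeff 0) (Cc * p.coeff 1)
    simpa [hT1_def, hU1_def, hr_def, norm_mul] using this
  by_cases hcase : 0 < cauchyFun q y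
  · -- strict case: conclude x < y
    by_contra hxy
    push_neg at hxy
    have hmono := cauchy_mono q hy hxy
    rw [hxroot] at hmono
    have : 0 < cauchyFun q y * x ^ q.natDegree := by positivity
    simp at hmono
    nlinarith [pow_pos hx q.natDegree]
  · -- equality case: derive contradiction with hnozero
    exfalso
    push_neg at hcase
    rw [hkey] at hcase
    have hterm_nonneg : ∀ j ∈ Finset.range (m + 1), 0 ≤ (U j - T j) * y ^ (j + 2) :=
      fun j _ => mul_nonneg (by linarith [hTU j]) (by positivity)
    have hsum_nonneg : 0 ≤ ∑ j ∈ Finset.range (m + 1), (U j - T j) * y ^ (j + 2) :=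
      Finset.sum_nonneg hterm_nonneg
    have h2 : 0 ≤ (U1 - T1) * y := mul_nonneg (by linarith [hTU1]) hy.le
    have hsum0 : ∑ j ∈ Finset.range (m + 1), (U j - T j) * y ^ (j + 2) = 0 :=
      le_antisymm (by linarith) hsum_nonneg
    have hU1T1 : T1 = U1 := by
      have hz : (U1 - T1) * y = 0 := by linarith
      rcases mul_eq_zero.mp hz with h | h
      · linarith
      · exact absurd h (ne_of_gt hy)
    have hUT : ∀ j, j ≤ m → T j = U j := by
      intro j hj
      have h0 := (Finset.sum_eq_zero_iff_of_nonneg hterm_nonneg).mp hsum0 j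
        (Finset.mem_range.mpr (by omega))
      have hyp : (0 : ℝ) < y ^ (j + 2) := by positivity
      rcases mul_eq_zero.mp h0 with h | h
      · linarith
      · exact absurd h (ne_of_gt hyp)
    -- rfl lemmas for moduli
    have hrA : ‖A‖ = r (m + 3) := rfl
    have hrB : ‖B‖ = r (m + 2) := rfl
    have hrC : ‖Cc‖ = r (m + 1) := rfl
    have hrp : ∀ j, ‖p.coeff j‖ = r j := fun _ => rfl
    have hrCne : ∀ j, j ≤ m + 3 → ((r j : ℝ) : ℂ) ≠ 0 := fun j hj =>
      Complex.ofReal_ne_zero.mpr (hr_ne j hj)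
    -- the common ratio
    set c : ℂ := -(((r (m + 2) : ℝ) : ℂ) * A) / (((r (m + 3) : ℝ) : ℂ) * B) with hc_def
    have hc0 : c ≠ 0 := by
      rw [hc_def]
      apply div_ne_zero
      · exact neg_ne_zero.mpr (mul_ne_zero (hrCne _ (by omega)) hA0)
      · exact mul_ne_zero (hrCne _ le_rfl) hB0
    have hcdef' : c * (((r (m + 3) : ℝ) : ℂ) * B) = -(((r (m + 2) : ℝ) : ℂ) * A) := by
      rw [hc_def]
      exact div_mul_cancel₀ _ (mul_ne_zero (hrCne _ le_rfl) hB0)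
    have abs_sub_le2 : ∀ u v : ℂ, ‖u - v‖ ≤ ‖u‖ + ‖v‖ :=
      fun u v => by simpa using norm_sub_le u v
    -- the basic recurrence for coefficients 0,...,m+1
    have hR1 : ∀ j, j ≤ m →
        ((r j : ℝ) : ℂ) * p.coeff (j + 1) = c * ((r (j + 1) : ℝ) : ℂ) * p.coeff j := by
      intro j hj
      have e1 : ‖A * p.coeff j - B * p.coeff (j + 1) - Cc * p.coeff (j + 2)‖
          = r (m + 3) * r j + r (m + 2) * r (j + 1) + r (m + 1) * r (j + 2) := hUT j hj
      have u2 := abs_sub_le2 (A * p.coeff j - B * p.coeff (j + 1)) (Cc * p.coeff (j + 2))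
      rw [norm_mul, hrC, hrp] at u2
      have u3 := abs_sub_le2 (A * p.coeff j) (B * p.coeff (j + 1))
      rw [norm_mul, norm_mul, hrA, hrB, hrp, hrp] at u3
      have t2 : ‖A * p.coeff j - B * p.coeff (j + 1)‖
          = r (m + 3) * r j + r (m + 2) * r (j + 1) := by linarith
      have hsr : SameRay ℝ (A * p.coeff j) (-(B * p.coeff (j + 1))) := by
        rw [sameRay_iff_norm_add, norm_neg, ← sub_eq_add_neg]
        rw [t2,
          norm_mul, norm_mul, hrA, hrB, hrp, hrp]
      have hsm : (((r (m + 3) : ℝ) : ℂ) * ((r j : ℝ) : ℂ)) * -(B * p.coeff (j + 1))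
          = (((r (m + 2) : ℝ) : ℂ) * ((r (j + 1) : ℝ) : ℂ)) * (A * p.coeff j) := by
        have h := hsr.norm_smul_eq
        rw [norm_neg, norm_mul, norm_mul,
          hrA, hrB, hrp, hrp, Complex.real_smul, Complex.real_smul] at h
        push_cast at h
        linear_combination h
      apply mul_left_cancel₀ (mul_ne_zero (hrCne (m + 3) le_rfl) hB0)
      linear_combination (-1 : ℂ) * hsm - ((r (j + 1) : ℝ) : ℂ) * p.coeff j * hcdef'
    -- the recurrence at the top low index (from the coefficient of z¹)
    have hsr2 : SameRay ℝ (B * p.coeff 0) (Cc * p.coeff 1) := by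
      have e1' : ‖B * p.coeff 0 + Cc * p.coeff 1‖
          = r (m + 2) * r 0 + r (m + 1) * r 1 := hU1T1
      rw [sameRay_iff_norm_add,
        e1', norm_mul, norm_mul, hrB, hrC, hrp, hrp]
    have hsm2 : (((r (m + 2) : ℝ) : ℂ) * ((r 0 : ℝ) : ℂ)) * (Cc * p.coeff 1)
        = (((r (m + 1) : ℝ) : ℂ) * ((r 1 : ℝ) : ℂ)) * (B * p.coeff 0) := by
      have h := hsr2.norm_smul_eq
      rw [norm_mul, norm_mul,
        hrB, hrC, hrp, hrp, Complex.real_smul, Complex.real_smul] at h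
      push_cast at h
      linear_combination h
    have hR1top : ((r (m + 1) : ℝ) : ℂ) * p.coeff (m + 2)
        = c * ((r (m + 2) : ℝ) : ℂ) * p.coeff (m + 1) := by
      apply mul_right_cancel₀ (mul_ne_zero (hrCne 1 (by omega)) (ha 0 (by omega)))
      have h10 := hR1 0 (by omega)
      rw [← hB_def, ← hC_def]
      linear_combination (-1 : ℂ) * hsm2 + ((r (m + 2) : ℝ) : ℂ) * Cc * h10
    have hCdef2 : ((r (m + 2) : ℝ) : ℂ) * p.coeff (m + 3)
        = -(c * ((r (m + 3) : ℝ) : ℂ) * p.coeff (m + 2)) := by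
      rw [← hA_def, ← hB_def]
      linear_combination hcdef'
    -- inductive claim
    have hclaim : ∀ j, j ≤ m + 2 →
        ((r 0 : ℝ) : ℂ) * p.coeff j = c ^ j * ((r j : ℝ) : ℂ) * p.coeff 0 := by
      intro j
      induction j with
      | zero => intro _; ring
      | succ j ih =>
        intro hj
        have ihj := ih (by omega)
        have hrel : ((r j : ℝ) : ℂ) * p.coeff (j + 1)
            = c * ((r (j + 1) : ℝ) : ℂ) * p.coeff j := by
          rcases Nat.lt_or_ge j (m + 1) with h | h
          · exact hR1 j (by omega)
          · have hjm : j = m + 1 := by omega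
            rw [hjm]
            exact hR1top
        apply mul_left_cancel₀ (hrCne j (by omega))
        linear_combination ((r 0 : ℝ) : ℂ) * hrel + c * ((r (j + 1) : ℝ) : ℂ) * ihj
    have htop : ((r 0 : ℝ) : ℂ) * p.coeff (m + 3)
        = -(c ^ (m + 3) * ((r (m + 3) : ℝ) : ℂ) * p.coeff 0) := by
      have h2' := hclaim (m + 2) le_rfl
      apply mul_left_cancel₀ (hrCne (m + 2) (by omega))
      linear_combination ((r 0 : ℝ) : ℂ) * hCdef2 - c * ((r (m + 3) : ℝ) : ℂ) * h2'
    -- c has modulus one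
    have hcabs : ‖c‖ = 1 := by
      rw [hc_def, norm_div, norm_neg, norm_mul, norm_mul,
        Complex.norm_real, Real.norm_eq_abs, Complex.norm_real, Real.norm_eq_abs,
        _root_.abs_of_nonneg (hr_nonneg _), _root_.abs_of_nonneg (hr_nonneg _), hrA, hrB]
      rw [div_eq_one_iff_eq (mul_ne_zero (hr_ne _ le_rfl) (hr_ne _ (by omega)))]
      ring
    -- the zero of modulus y
    set z : ℂ := (y : ℂ) / c with hz_def
    have hcz : c * z = (y : ℂ) := mul_div_cancel₀ _ hc0
    have hzabs : ‖z‖ = y := by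
      rw [hz_def, norm_div, hcabs, Complex.norm_real, Real.norm_eq_abs, _root_.abs_of_pos hy, div_one]
    have heval : p.eval z = 0 := by
      have h0 : ((r 0 : ℝ) : ℂ) ≠ 0 := hrCne 0 (by omega)
      have hmul : ((r 0 : ℝ) : ℂ) * p.eval z = 0 := by
        rw [eval_eq_sum_range, hn, Finset.mul_sum, Finset.sum_range_succ]
        have hterm : ∀ i ∈ Finset.range (m + 3),
            ((r 0 : ℝ) : ℂ) * (p.coeff i * z ^ i) = ((r i * y ^ i : ℝ) : ℂ) * p.coeff 0 := by
          intro i hi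
          have hi' : i ≤ m + 2 := by
            have := Finset.mem_range.mp hi; omega
          have h1 := hclaim i hi'
          have hpow : c ^ i * z ^ i = ((y : ℂ)) ^ i := by rw [← mul_pow, hcz]
          calc ((r 0 : ℝ) : ℂ) * (p.coeff i * z ^ i)
              = (((r 0 : ℝ) : ℂ) * p.coeff i) * z ^ i := by ring
            _ = (c ^ i * ((r i : ℝ) : ℂ) * p.coeff 0) * z ^ i := by rw [h1]
            _ = ((r i : ℝ) : ℂ) * (c ^ i * z ^ i) * p.coeff 0 := by ring
            _ = ((r i : ℝ) : ℂ) * ((y : ℂ)) ^ i * p.coeff 0 := by rw [hpow]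
            _ = _ := by push_cast; ring
        rw [Finset.sum_congr rfl hterm]
        have hlast : ((r 0 : ℝ) : ℂ) * (p.coeff (m + 3) * z ^ (m + 3))
            = -(((r (m + 3) * y ^ (m + 3) : ℝ) : ℂ)) * p.coeff 0 := by
          have hpow : c ^ (m + 3) * z ^ (m + 3) = ((y : ℂ)) ^ (m + 3) := by
            rw [← mul_pow, hcz]
          calc ((r 0 : ℝ) : ℂ) * (p.coeff (m + 3) * z ^ (m + 3))
              = (((r 0 : ℝ) : ℂ) * p.coeff (m + 3)) * z ^ (m + 3) := by ring
            _ = (-(c ^ (m + 3) * ((r (m + 3) : ℝ) : ℂ) * p.coeff 0)) * z ^ (m + 3) := by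
                rw [htop]
            _ = -(((r (m + 3) : ℝ) : ℂ) * (c ^ (m + 3) * z ^ (m + 3)) * p.coeff 0) := by ring
            _ = -(((r (m + 3) : ℝ) : ℂ) * ((y : ℂ)) ^ (m + 3) * p.coeff 0) := by rw [hpow]
            _ = _ := by push_cast; ring
        rw [hlast, ← Finset.sum_mul, ← Complex.ofReal_sum, ← hS]
        ring
      rcases mul_eq_zero.mp hmul with h | h
      · exact absurd h h0
      · exact h
    exact hnozero z heval hzabs
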